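/- Let X be a real or complex linear space endowed with a norm ‖·‖ (not necessarily complete) and let 1 ≤ p < ∞. Suppose a series ∑_{k=0}^∞ u_k with terms in X is (C,1) summable in X to a vector S ∈ X and that its tails satisfy ∑_{k=n+1}^∞ ‖u_k‖^p = O(1/n^{p-1}) as n → ∞ (i.e., there exist M > 0 and n₀ such that ∑_{k=n+1}^∞ ‖u_k‖^p ≤ M/n^{p-1} for all n ≥ n₀). Then the partial sums S_n converge to S in X. -/

import Mathlib

open Filter Finset Topology

lemma tauberian_key {X : Type*} [NormedAddCommGroup X] [NormedSpace ℝ X]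
    (u : ℕ → X) (S : X) (n d : ℕ) (hd : 1 ≤ d) :
    ‖(∑ k ∈ range (n + 1), u k) - S‖ ≤
      ((n : ℝ) + d + 1) / d *
        ‖(((n + d : ℕ) : ℝ) + 1)⁻¹ •
          (∑ i ∈ range (n + d + 1), ∑ k ∈ range (i + 1), u k) - S‖
      + ((n : ℝ) + 1) / d *
        ‖((n : ℝ) + 1)⁻¹ • (∑ i ∈ range (n + 1), ∑ k ∈ range (i + 1), u k) - S‖
      + ∑ k ∈ range d, ‖u (n + 1 + k)‖ := by
  have hd0 : (0 : ℝ) < d := by exact_mod_cast hd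
  set E : ℝ := ∑ k ∈ range d, ‖u (n + 1 + k)‖ with hE
  set Sn : ℕ → X := fun i => ∑ k ∈ range (i + 1), u k with hSn
  set A : ℕ → X := fun i => ∑ j ∈ range (i + 1), Sn j with hA
  set R : X := ∑ i ∈ range d, (Sn (n + 1 + i) - Sn n) with hR
  have hAd : A (n + d) = A n + (∑ i ∈ range d, Sn (n + 1 + i)) := by
    show (∑ j ∈ range (n + d + 1), Sn j) = (∑ j ∈ range (n + 1), Sn j) + _
    rw [show n + d + 1 = (n + 1) + d from by omega, Finset.sum_range_add]
  have hReq : R = A (n + d) - A n - (d : ℝ) • Sn n := by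
    rw [hR, hAd, Finset.sum_sub_distrib, Finset.sum_const, Finset.card_range,
      Nat.cast_smul_eq_nsmul]
    abel
  set σm : X := (((n + d : ℕ) : ℝ) + 1)⁻¹ • A (n + d) with hσm
  set σn : X := ((n : ℝ) + 1)⁻¹ • A n with hσn
  have hm0 : (((n + d : ℕ) : ℝ) + 1) ≠ 0 := by positivity
  have hn0 : ((n : ℝ) + 1) ≠ 0 := by positivity
  have hAm' : A (n + d) = (((n + d : ℕ) : ℝ) + 1) • σm := by
    rw [hσm, smul_inv_smul₀ hm0]
  have hAn' : A n = ((n : ℝ) + 1) • σn := by rw [hσn, smul_inv_smul₀ hn0]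
  have key : Sn n - S = (d : ℝ)⁻¹ •
      ((((n + d : ℕ) : ℝ) + 1) • (σm - S) - ((n : ℝ) + 1) • (σn - S) - R) := by
    have h1 : (((n + d : ℕ) : ℝ) + 1) • (σm - S) - ((n : ℝ) + 1) • (σn - S) - R
        = (d : ℝ) • (Sn n - S) := by
      rw [hReq, hAm', hAn']
      push_cast
      module
    rw [h1, inv_smul_smul₀ (ne_of_gt hd0)]
  have hterm : ∀ i ∈ range d, ‖Sn (n + 1 + i) - Sn n‖ ≤ E := by
    intro i hi
    have h1 : Sn (n + 1 + i) = Sn n + ∑ k ∈ range (i + 1), u (n + 1 + k) := by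
      show (∑ k ∈ range (n + 1 + i + 1), u k) = (∑ k ∈ range (n + 1), u k) + _
      rw [show n + 1 + i + 1 = (n + 1) + (i + 1) from by omega, Finset.sum_range_add]
    rw [h1, add_sub_cancel_left]
    refine (norm_sum_le _ _).trans ?_
    apply Finset.sum_le_sum_of_subset_of_nonneg
    · exact Finset.range_subset_range.2 (Nat.succ_le_of_lt (Finset.mem_range.1 hi))
    · intros; positivity
  have hRnorm : ‖R‖ ≤ (d : ℝ) * E := by
    refine (norm_sum_le _ _).trans ?_
    calc ∑ i ∈ range d, ‖Sn (n + 1 + i) - Sn n‖ ≤ ∑ _i ∈ range d, E :=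
          Finset.sum_le_sum hterm
      _ = (d : ℝ) * E := by rw [Finset.sum_const, Finset.card_range, nsmul_eq_mul]
  calc ‖Sn n - S‖
      = |(d : ℝ)⁻¹| * ‖(((n + d : ℕ) : ℝ) + 1) • (σm - S) - ((n : ℝ) + 1) • (σn - S) - R‖ := by
        rw [key, norm_smul, Real.norm_eq_abs]
    _ ≤ (d : ℝ)⁻¹ * ((((n + d : ℕ) : ℝ) + 1) * ‖σm - S‖ + ((n : ℝ) + 1) * ‖σn - S‖
          + (d : ℝ) * E) := by
        rw [abs_of_nonneg (by positivity)]
        apply mul_le_mul_of_nonneg_left _ (by positivity)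
        refine (norm_sub_le _ _).trans ?_
        refine add_le_add (le_trans (norm_sub_le _ _) ?_) hRnorm
        rw [norm_smul, norm_smul, Real.norm_eq_abs, Real.norm_eq_abs,
          abs_of_nonneg (by positivity : (0:ℝ) ≤ ((n + d : ℕ) : ℝ) + 1),
          abs_of_nonneg (by positivity : (0:ℝ) ≤ (n : ℝ) + 1)]
    _ = ((n : ℝ) + d + 1) / d * ‖σm - S‖ + ((n : ℝ) + 1) / d * ‖σn - S‖ + E := by
        push_cast
        field_simp
set_option maxHeartbeats 1000000 in
theorem tauberian_cesaro_tail_bigO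
    {X : Type*} [NormedAddCommGroup X] [NormedSpace ℝ X]
    (u : ℕ → X) (S : X) (p : ℝ) (hp : 1 ≤ p)
    (hC1 : Tendsto (fun n : ℕ =>
        ((n : ℝ) + 1)⁻¹ • ∑ i ∈ range (n + 1), ∑ k ∈ range (i + 1), u k)
      atTop (𝓝 S))
    (hSummable : Summable fun k : ℕ => ‖u k‖ ^ p)
    (M : ℝ) (hM : 0 < M) (n₀ : ℕ)
    (htail : ∀ n : ℕ, n₀ ≤ n →
        (∑' k : ℕ, ‖u (n + 1 + k)‖ ^ p) ≤ M / (n : ℝ) ^ (p - 1)) :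
    Tendsto (fun n : ℕ => ∑ k ∈ range (n + 1), u k) atTop (𝓝 S) := by
  have hp0 : 0 < p := lt_of_lt_of_le zero_lt_one hp
  have hshift : ∀ m : ℕ, Summable fun k : ℕ => ‖u (m + 1 + k)‖ ^ p := by
    intro m
    have h := (summable_nat_add_iff (m + 1)).2 hSummable
    refine h.congr fun k => ?_
    simp [add_comm]
  rw [Metric.tendsto_atTop] at hC1 ⊢
  intro ε hε
  obtain ⟨q, hq1, N₁, hN₁⟩ : ∃ q : ℕ, 1 ≤ q ∧ ∃ N₁ : ℕ, ∀ n, N₁ ≤ n →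
      (∑ k ∈ range (n / q + 1), ‖u (n + 1 + k)‖) < ε / 3 := by
    rcases eq_or_lt_of_le hp with hp1 | hp1
    · -- p = 1
      refine ⟨1, le_refl 1, ?_⟩
      have hsum1 : Summable fun k : ℕ => ‖u k‖ := by
        refine hSummable.congr fun k => ?_
        rw [← hp1, Real.rpow_one]
      have h0 : Tendsto (fun i : ℕ => ∑' k : ℕ, ‖u (k + i)‖) atTop (𝓝 0) :=
        tendsto_sum_nat_add (fun k => ‖u k‖)
      rw [Metric.tendsto_atTop] at h0
      obtain ⟨N, hN⟩ := h0 (ε / 3) (by positivity)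
      refine ⟨N, fun n hn => ?_⟩
      have hsum' : Summable fun k : ℕ => ‖u (n + 1 + k)‖ := by
        refine (hshift n).congr fun k => ?_
        rw [← hp1, Real.rpow_one]
      have h1 : (∑ k ∈ range (n / 1 + 1), ‖u (n + 1 + k)‖) ≤ ∑' k : ℕ, ‖u (n + 1 + k)‖ :=
        Summable.sum_le_tsum _ (fun k _ => norm_nonneg _) hsum'
      refine lt_of_le_of_lt h1 ?_
      have h2 := hN (n + 1) (by omega)
      rw [Real.dist_eq, sub_zero] at h2
      have h3 : (∑' k : ℕ, ‖u (n + 1 + k)‖) = ∑' k : ℕ, ‖u (k + (n + 1))‖ := by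
        refine tsum_congr fun k => ?_
        rw [add_comm k (n + 1)]
      rw [h3]
      calc (∑' k : ℕ, ‖u (k + (n + 1))‖) ≤ |∑' k : ℕ, ‖u (k + (n + 1))‖| := le_abs_self _
        _ < ε / 3 := h2
    · -- p > 1
      have he : 0 < (p - 1) / p := by
        apply div_pos (by linarith) hp0
      set e : ℝ := (p - 1) / p with hedef
      have hMp : 0 < M ^ (1 / p) := Real.rpow_pos_of_pos hM _
      set b : ℝ := ε / (3 * (M ^ (1 / p) + 1)) with hbdef
      have hb : 0 < b := div_pos hε (by positivity)
      set c : ℝ := b ^ (1 / e) with hcdef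
      have hc : 0 < c := Real.rpow_pos_of_pos hb _
      have hce : c ^ e = b := by
        rw [hcdef, ← Real.rpow_mul hb.le, one_div, inv_mul_cancel₀ he.ne', Real.rpow_one]
      set q : ℕ := ⌈2 / c⌉₊ + 1 with hqdef
      have hq0 : 0 < q := Nat.succ_pos _
      have h2q : (2 : ℝ) / q ≤ c := by
        rw [div_le_iff₀ (by exact_mod_cast hq0)]
        have h1 : 2 / c ≤ (q : ℝ) := by
          rw [hqdef]
          push_cast
          exact (Nat.le_ceil _).trans (by linarith)
        have h2 : c * (2 / c) = 2 := by field_simp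
        nlinarith [mul_le_mul_of_nonneg_left h1 hc.le]
      refine ⟨q, hq0, max n₀ q, fun n hn => ?_⟩
      have hnn₀ : n₀ ≤ n := le_trans (le_max_left _ _) hn
      have hnq : q ≤ n := le_trans (le_max_right _ _) hn
      have hn1 : 1 ≤ n := le_trans hq0 hnq
      have hn0R : (0 : ℝ) < n := by exact_mod_cast hn1
      set d : ℕ := n / q + 1 with hddef
      have hd0 : (0 : ℝ) < d := by positivity
      -- Hölder inequality
      have hpq : p.HolderConjugate (p / (p - 1)) := Real.HolderConjugate.conjExponent hp1
      have hHolder : (∑ k ∈ range d, ‖u (n + 1 + k)‖) ≤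
          (∑ k ∈ range d, ‖u (n + 1 + k)‖ ^ p) ^ (1 / p) * (d : ℝ) ^ e := by
        have h := Real.inner_le_Lp_mul_Lq (s := range d)
          (f := fun k => ‖u (n + 1 + k)‖) (g := fun _ => (1 : ℝ)) hpq
        simp only [mul_one, abs_one, Real.one_rpow, Finset.sum_const, Finset.card_range,
          nsmul_eq_mul] at h
        have habs : ∀ k, |‖u (n + 1 + k)‖| = ‖u (n + 1 + k)‖ := fun k =>
          abs_of_nonneg (norm_nonneg _)
        simp only [habs] at h
        refine h.trans (le_of_eq ?_)
        rw [one_div_div]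
      -- tail bound
      have hsumtail : (∑ k ∈ range d, ‖u (n + 1 + k)‖ ^ p) ≤ M / (n : ℝ) ^ (p - 1) :=
        le_trans (Summable.sum_le_tsum _ (fun k _ => Real.rpow_nonneg (norm_nonneg _) _) (hshift n))
          (htail n hnn₀)
      have hfin_nonneg : (0 : ℝ) ≤ ∑ k ∈ range d, ‖u (n + 1 + k)‖ ^ p :=
        Finset.sum_nonneg fun k _ => Real.rpow_nonneg (norm_nonneg _) _
      have hstep1 : ((∑ k ∈ range d, ‖u (n + 1 + k)‖ ^ p) : ℝ) ^ (1 / p)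
          ≤ (M / (n : ℝ) ^ (p - 1)) ^ (1 / p) :=
        Real.rpow_le_rpow hfin_nonneg hsumtail (by positivity)
      -- (M / n^(p-1))^(1/p) = M^(1/p) / n^e
      have hMn : (M / (n : ℝ) ^ (p - 1)) ^ (1 / p) = M ^ (1 / p) / (n : ℝ) ^ e := by
        rw [Real.div_rpow hM.le (Real.rpow_nonneg hn0R.le _),
          ← Real.rpow_mul hn0R.le]
        congr 2
        rw [hedef]; ring
      -- d ≤ 2n/q
      have hdle : (d : ℝ) ≤ 2 * n / q := by
        have h1 : ((n / q : ℕ) : ℝ) ≤ (n : ℝ) / q := Nat.cast_div_le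
        have h2 : (1 : ℝ) ≤ (n : ℝ) / q := by
          rw [le_div_iff₀ (by exact_mod_cast hq0)]
          simpa using (Nat.cast_le (α := ℝ)).2 hnq
        have : (d : ℝ) = ((n / q : ℕ) : ℝ) + 1 := by rw [hddef]; push_cast; ring
        rw [this]
        calc ((n / q : ℕ) : ℝ) + 1 ≤ (n : ℝ) / q + (n : ℝ) / q := add_le_add h1 h2
          _ = 2 * n / q := by ring
      have hde : (d : ℝ) ^ e ≤ (2 / q * n) ^ e := by
        apply Real.rpow_le_rpow hd0.le _ he.le
        rw [div_mul_eq_mul_div]; linarith [hdle]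
      have hq0R : (0 : ℝ) < q := by exact_mod_cast hq0
      have hsplit : ((2 / q : ℝ) * n) ^ e = (2 / q : ℝ) ^ e * (n : ℝ) ^ e :=
        Real.mul_rpow (by positivity) hn0R.le
      have hne : (0 : ℝ) < (n : ℝ) ^ e := Real.rpow_pos_of_pos hn0R _
      -- combine
      calc (∑ k ∈ range d, ‖u (n + 1 + k)‖)
          ≤ (∑ k ∈ range d, ‖u (n + 1 + k)‖ ^ p) ^ (1 / p) * (d : ℝ) ^ e := hHolder
        _ ≤ (M ^ (1 / p) / (n : ℝ) ^ e) * ((2 / q : ℝ) ^ e * (n : ℝ) ^ e) := by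
            rw [← hMn, ← hsplit]
            apply mul_le_mul hstep1 hde (Real.rpow_nonneg hd0.le _) (by positivity)
        _ = (2 / q : ℝ) ^ e * M ^ (1 / p) := by field_simp
        _ ≤ c ^ e * M ^ (1 / p) := by
            apply mul_le_mul_of_nonneg_right _ hMp.le
            exact Real.rpow_le_rpow (by positivity) h2q he.le
        _ = b * M ^ (1 / p) := by rw [hce]
        _ < b * (M ^ (1 / p) + 1) := by nlinarith
        _ = ε / 3 := by
            have hX : (M ^ (1 / p) + 1) ≠ 0 := by positivity
            have hb' : b = ε / 3 / (M ^ (1 / p) + 1) := by rw [hbdef, div_div]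
            rw [hb', div_mul_cancel₀ _ hX]
  -- main wrap-up
  set δ : ℝ := ε / (3 * ((q : ℝ) + 1)) with hδdef
  have hδ : 0 < δ := by positivity
  obtain ⟨N₂, hN₂⟩ := hC1 δ hδ
  refine ⟨max N₁ N₂, fun n hn => ?_⟩
  have hnN₁ : N₁ ≤ n := le_trans (le_max_left _ _) hn
  have hnN₂ : N₂ ≤ n := le_trans (le_max_right _ _) hn
  set d : ℕ := n / q + 1 with hddef
  have hd1 : 1 ≤ d := Nat.succ_le_succ (Nat.zero_le _)
  have hd0 : (0 : ℝ) < d := by exact_mod_cast hd1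
  have hkey := tauberian_key u S n d hd1
  rw [dist_eq_norm]
  refine lt_of_le_of_lt hkey ?_
  -- coefficient bounds
  have hnat : n + 1 ≤ d * q := (Nat.div_lt_iff_lt_mul hq1).1 (Nat.lt_succ_self _)
  have hnatR : (n : ℝ) + 1 ≤ (d : ℝ) * q := by exact_mod_cast hnat
  have hc1 : ((n : ℝ) + d + 1) / d ≤ (q : ℝ) + 1 := by
    rw [div_le_iff₀ hd0]
    nlinarith
  have hc2 : ((n : ℝ) + 1) / d ≤ (q : ℝ) + 1 := by
    rw [div_le_iff₀ hd0]
    nlinarith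
  have hX1 : ‖(((n + d : ℕ) : ℝ) + 1)⁻¹ •
      (∑ i ∈ range (n + d + 1), ∑ k ∈ range (i + 1), u k) - S‖ < δ := by
    have h := hN₂ (n + d) (by omega)
    rwa [dist_eq_norm] at h
  have hX2 : ‖((n : ℝ) + 1)⁻¹ • (∑ i ∈ range (n + 1), ∑ k ∈ range (i + 1), u k) - S‖ < δ := by
    have h := hN₂ n hnN₂
    rwa [dist_eq_norm] at h
  have hE : (∑ k ∈ range d, ‖u (n + 1 + k)‖) < ε / 3 := hN₁ n hnN₁
  have hq0R : (0 : ℝ) < (q : ℝ) + 1 := by positivity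
  have f1 : ((n : ℝ) + d + 1) / d *
      ‖(((n + d : ℕ) : ℝ) + 1)⁻¹ • (∑ i ∈ range (n + d + 1), ∑ k ∈ range (i + 1), u k) - S‖
      ≤ ((q : ℝ) + 1) * ‖(((n + d : ℕ) : ℝ) + 1)⁻¹ •
        (∑ i ∈ range (n + d + 1), ∑ k ∈ range (i + 1), u k) - S‖ :=
    mul_le_mul_of_nonneg_right hc1 (norm_nonneg _)
  have f2 : ((q : ℝ) + 1) * ‖(((n + d : ℕ) : ℝ) + 1)⁻¹ •
      (∑ i ∈ range (n + d + 1), ∑ k ∈ range (i + 1), u k) - S‖ < ((q : ℝ) + 1) * δ :=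
    mul_lt_mul_of_pos_left hX1 hq0R
  have f3 : ((n : ℝ) + 1) / d *
      ‖((n : ℝ) + 1)⁻¹ • (∑ i ∈ range (n + 1), ∑ k ∈ range (i + 1), u k) - S‖
      ≤ ((q : ℝ) + 1) * ‖((n : ℝ) + 1)⁻¹ • (∑ i ∈ range (n + 1), ∑ k ∈ range (i + 1), u k) - S‖ :=
    mul_le_mul_of_nonneg_right hc2 (norm_nonneg _)
  have f4 : ((q : ℝ) + 1) * ‖((n : ℝ) + 1)⁻¹ •
      (∑ i ∈ range (n + 1), ∑ k ∈ range (i + 1), u k) - S‖ < ((q : ℝ) + 1) * δ :=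
    mul_lt_mul_of_pos_left hX2 hq0R
  have f5 : ((q : ℝ) + 1) * δ = ε / 3 := by
    rw [hδdef]
    field_simp
  linarith
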